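/- Let $(X,d)$ be a uniquely geodesic, non-positively curved (in the sense of Alexandrov) complete metric space and let $\Phi_t: X\to X$ be a semiflow that is distance-nonincreasing: $d(\Phi_t(x),\Phi_t(y))\leq d(x,y)$ for all $t\geq 0$. Suppose $x_1, x_2\in X$ and $\Phi_t(x_i)$ is asymptotic to a geodesic ray $\chi_i$ for $i=1,2$. Then $\chi_1$ and $\chi_2$ are parallel: $\sup_t d(\chi_1(t),\chi_2(t))<\infty$. -/

import Mathlib

/-- `σ` is a unit-speed geodesic segment from `x` to `y`. -/
def UnitGeodFromTo {X : Type*} [MetricSpace X] (σ : ℝ → X) (x y : X) : Prop :=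
  σ 0 = x ∧ σ (dist x y) = y ∧
    ∀ s ∈ Set.Icc (0 : ℝ) (dist x y), ∀ t ∈ Set.Icc (0 : ℝ) (dist x y),
      dist (σ s) (σ t) = |s - t|

/-- `χ` is a unit-speed geodesic ray. -/
def IsGeodesicRay {X : Type*} [MetricSpace X] (χ : ℝ → X) : Prop :=
  ∀ s t : ℝ, 0 ≤ s → 0 ≤ t → dist (χ s) (χ t) = |s - t|

/-- `γ` is asymptotic to the geodesic ray `χ`: for every fixed `s > 0`, the point at arc-length
parameter `s` on the unit-speed geodesic from `χ 0` to `γ t` converges to `χ s` as `t → ∞`. -/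
def IsAsymptoticTo {X : Type*} [MetricSpace X] (γ χ : ℝ → X) : Prop :=
  IsGeodesicRay χ ∧
    ∀ s > (0 : ℝ), ∀ ε > (0 : ℝ), ∃ T : ℝ, ∀ t ≥ T,
      s ≤ dist (χ 0) (γ t) ∧
      ∀ σ : ℝ → X, UnitGeodFromTo σ (χ 0) (γ t) → dist (σ s) (χ s) ≤ ε

/-- Every pair of points is joined by a unit-speed geodesic. -/
def GeodSpace (X : Type*) [MetricSpace X] : Prop :=
  ∀ x y : X, ∃ σ : ℝ → X, UnitGeodFromTo σ x y

/-- Non-positive curvature in the sense of Alexandrov (CN/Bruhat–Tits inequality); together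
with completeness and geodesicity this is the metric counterpart of a complete simply
connected space of non-positive curvature. -/
def CNIneq (X : Type*) [MetricSpace X] : Prop :=
  ∀ x y z m : X, dist y m = dist y z / 2 → dist z m = dist y z / 2 →
    dist x m ^ 2 ≤ dist x y ^ 2 / 2 + dist x z ^ 2 / 2 - dist y z ^ 2 / 4

lemma sq_le_imp' {a b : ℝ} (ha : 0 ≤ a) (hb : 0 ≤ b) (h : a^2 ≤ b^2) : a ≤ b := by
  nlinarith

lemma midA {X : Type*} [MetricSpace X] (hcn : CNIneq X) (x y z m n : X)
    (hm1 : dist x m = dist x y / 2) (hm2 : dist y m = dist x y / 2)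
    (hn1 : dist x n = dist x z / 2) (hn2 : dist z n = dist x z / 2) :
    dist m n ≤ dist y z / 2 := by
  have h1 := hcn n x y m hm1 hm2
  have h2 := hcn y x z n hn1 hn2
  rw [dist_comm n m, dist_comm n x, dist_comm n y] at h1
  rw [dist_comm y x] at h2
  rw [hn1] at h1
  have : dist m n ^ 2 ≤ (dist y z / 2)^2 := by nlinarith [h1, h2]
  exact sq_le_imp' dist_nonneg (by positivity) this

lemma midB {X : Type*} [MetricSpace X] (hgeo : GeodSpace X) (hcn : CNIneq X)
    (x y x' y' m m' : X)
    (hm1 : dist x m = dist x y / 2) (hm2 : dist y m = dist x y / 2)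
    (hm1' : dist x' m' = dist x' y' / 2) (hm2' : dist y' m' = dist x' y' / 2) :
    dist m m' ≤ dist x x' / 2 + dist y y' / 2 := by
  obtain ⟨σ, hσ0, hσd, hσ⟩ := hgeo x y'
  set n := σ (dist x y' / 2) with hn
  have hd : (0:ℝ) ≤ dist x y' := dist_nonneg
  have h0mem : (0:ℝ) ∈ Set.Icc (0:ℝ) (dist x y') := ⟨le_refl _, hd⟩
  have hhalf : dist x y' / 2 ∈ Set.Icc (0:ℝ) (dist x y') := ⟨by linarith, by linarith⟩
  have hdmem : dist x y' ∈ Set.Icc (0:ℝ) (dist x y') := ⟨hd, le_refl _⟩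
  have hn1 : dist x n = dist x y' / 2 := by
    have := hσ 0 h0mem (dist x y'/2) hhalf
    rw [hσ0] at this
    rw [hn, this, abs_of_nonpos (by linarith)]; ring
  have hn2 : dist y' n = dist x y' / 2 := by
    have := hσ (dist x y') hdmem (dist x y'/2) hhalf
    rw [hσd] at this
    rw [hn, this, abs_of_nonneg (by linarith)]; ring
  have h1 : dist m n ≤ dist y y' / 2 := midA hcn x y y' m n hm1 hm2 hn1 hn2
  have h2 : dist m' n ≤ dist x' x / 2 := by
    apply midA hcn y' x' x m' n
    · rw [dist_comm y' x']; exact hm2'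
    · rw [dist_comm y' x']; exact hm1'
    · rw [dist_comm y' x]; exact hn2
    · rw [dist_comm y' x]; exact hn1
  calc dist m m' ≤ dist m n + dist n m' := dist_triangle _ _ _
    _ = dist m n + dist m' n := by rw [dist_comm n m']
    _ ≤ dist y y' / 2 + dist x' x / 2 := by linarith
    _ = dist x x' / 2 + dist y y' / 2 := by rw [dist_comm x' x]; ring

lemma geod_param {X : Type*} [MetricSpace X] {σ : ℝ → X} {x y : X}
    (h : UnitGeodFromTo σ x y) {u v : ℝ} (hu0 : 0 ≤ u) (hu1 : u ≤ 1)
    (hv0 : 0 ≤ v) (hv1 : v ≤ 1) :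
    dist (σ (u * dist x y)) (σ (v * dist x y)) = |u - v| * dist x y := by
  have hL : (0:ℝ) ≤ dist x y := dist_nonneg
  have := h.2.2 (u * dist x y) ⟨by positivity, by nlinarith⟩
      (v * dist x y) ⟨by positivity, by nlinarith⟩
  rw [this, ← sub_mul, abs_mul, abs_of_nonneg hL]

lemma geod_conv {X : Type*} [MetricSpace X] (hgeo : GeodSpace X) (hcn : CNIneq X)
    (σ σ' : ℝ → X) (x y x' y' : X)
    (h : UnitGeodFromTo σ x y) (h' : UnitGeodFromTo σ' x' y')
    (lam : ℝ) (hl0 : 0 ≤ lam) (hl1 : lam ≤ 1) :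
    dist (σ (lam * dist x y)) (σ' (lam * dist x' y')) ≤ max (dist x x') (dist y y') := by
  set L := dist x y with hLdef
  set L' := dist x' y' with hL'def
  set M := max (dist x x') (dist y y') with hMdef
  have hL : (0:ℝ) ≤ L := dist_nonneg
  have hL' : (0:ℝ) ≤ L' := dist_nonneg
  -- dyadic points
  have dyadic : ∀ n : ℕ, ∀ k : ℕ, k ≤ 2^n →
      dist (σ (((k : ℝ) / 2^n) * L)) (σ' (((k : ℝ) / 2^n) * L')) ≤ M := by
    intro n
    induction n with
    | zero =>
      intro k hk
      interval_cases k
      · simp only [Nat.cast_zero, pow_zero, zero_div, zero_mul]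
        rw [h.1, h'.1]; exact le_max_left _ _
      · simp only [Nat.cast_one, pow_zero, div_one, one_mul]
        show dist (σ (dist x y)) (σ' (dist x' y')) ≤ M
        rw [h.2.1, h'.2.1]; exact le_max_right _ _
    | succ n ih =>
      intro k hk
      rw [pow_succ] at hk
      rcases Nat.even_or_odd k with ⟨j, hj⟩ | ⟨j, hj⟩
      · have hj2 : j ≤ 2^n := by omega
        have hcast : ((k : ℝ) / 2^(n+1)) = (j : ℝ) / 2^n := by
          subst hj; push_cast; ring
        rw [hcast]; exact ih j hj2
      · have hj2 : j + 1 ≤ 2^n := by omega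
        have hj3 : j ≤ 2^n := by omega
        set a : ℝ := (j : ℝ) / 2^n with hadef
        set b : ℝ := ((j : ℝ) + 1) / 2^n with hbdef
        have h2n : (0:ℝ) < 2^n := by positivity
        have ha0 : 0 ≤ a := by positivity
        have hab : a ≤ b := by
          rw [hadef, hbdef, div_le_div_iff₀ h2n h2n]; nlinarith
        have hb1 : b ≤ 1 := by
          rw [hbdef, div_le_one h2n]
          have : ((j:ℝ) + 1) ≤ (2^n : ℕ) := by exact_mod_cast hj2
          simpa using this
        have ha1 : a ≤ 1 := le_trans hab hb1
        have hb0 : 0 ≤ b := le_trans ha0 hab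
        have hc0 : 0 ≤ (a + b)/2 := by linarith
        have hc1 : (a + b)/2 ≤ 1 := by linarith
        have hcast : ((k : ℝ) / 2^(n+1)) = (a + b) / 2 := by
          subst hj; rw [hadef, hbdef]; push_cast; ring
        rw [hcast]
        -- midpoint hypotheses
        have hma : dist (σ (a*L)) (σ (((a+b)/2)*L)) = dist (σ (a*L)) (σ (b*L)) / 2 := by
          rw [geod_param h ha0 ha1 hc0 hc1, geod_param h ha0 ha1 hb0 hb1,
            abs_of_nonpos (by linarith), abs_of_nonpos (by linarith)]
          ring
        have hmb : dist (σ (b*L)) (σ (((a+b)/2)*L)) = dist (σ (a*L)) (σ (b*L)) / 2 := by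
          rw [geod_param h hb0 hb1 hc0 hc1, geod_param h ha0 ha1 hb0 hb1,
            abs_of_nonneg (by linarith), abs_of_nonpos (by linarith)]
          ring
        have hma' : dist (σ' (a*L')) (σ' (((a+b)/2)*L')) = dist (σ' (a*L')) (σ' (b*L')) / 2 := by
          rw [geod_param h' ha0 ha1 hc0 hc1, geod_param h' ha0 ha1 hb0 hb1,
            abs_of_nonpos (by linarith), abs_of_nonpos (by linarith)]
          ring
        have hmb' : dist (σ' (b*L')) (σ' (((a+b)/2)*L')) = dist (σ' (a*L')) (σ' (b*L')) / 2 := by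
          rw [geod_param h' hb0 hb1 hc0 hc1, geod_param h' ha0 ha1 hb0 hb1,
            abs_of_nonneg (by linarith), abs_of_nonpos (by linarith)]
          ring
        have key := midB hgeo hcn (σ (a*L)) (σ (b*L)) (σ' (a*L')) (σ' (b*L'))
          (σ (((a+b)/2)*L)) (σ' (((a+b)/2)*L')) hma hmb hma' hmb'
        have ga := ih j hj3
        have gb := ih (j+1) hj2
        rw [← hadef] at ga
        have gb' : dist (σ (b * L)) (σ' (b * L')) ≤ M := by
          have : ((j:ℝ) + 1) = ((j + 1 : ℕ) : ℝ) := by push_cast; ring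
          rw [hbdef, this]; exact gb
        calc dist (σ ((a+b)/2 * L)) (σ' ((a+b)/2 * L'))
            ≤ dist (σ (a*L)) (σ' (a*L')) / 2 + dist (σ (b*L)) (σ' (b*L')) / 2 := key
          _ ≤ M / 2 + M / 2 := by linarith
          _ = M := by ring
  -- density
  refine le_of_forall_pos_le_add ?_
  intro ε hε
  obtain ⟨n, hn⟩ := exists_pow_lt_of_lt_one
    (show (0:ℝ) < ε / (L + L' + 1) by positivity) (by norm_num : (1:ℝ)/2 < 1)
  have h2n : (0:ℝ) < 2^n := by positivity
  have hpow : ((1:ℝ)/2)^n = 1/2^n := by rw [div_pow, one_pow]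
  set k := ⌊lam * 2^n⌋₊ with hk
  have hk2 : (k:ℝ) ≤ lam * 2^n := Nat.floor_le (by positivity)
  have hk3 : lam * 2^n < k + 1 := Nat.lt_floor_add_one _
  have hkle : (k:ℝ) ≤ 2^n := by nlinarith
  set q : ℝ := (k:ℝ) / 2^n with hq
  have hq0 : 0 ≤ q := by positivity
  have hq1 : q ≤ 1 := by rw [hq, div_le_one h2n]; exact hkle
  have hkn : k ≤ 2^n := by exact_mod_cast hkle
  have hgd := dyadic n k hkn
  have hdiff : lam - q < 1/2^n := by
    rw [hq, sub_lt_iff_lt_add, ← add_div, lt_div_iff₀ h2n]; linarith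
  have hdiff0 : 0 ≤ lam - q := by
    rw [hq, sub_nonneg, div_le_iff₀ h2n]; exact hk2
  rw [lt_div_iff₀ (by positivity : (0:ℝ) < L + L' + 1), hpow] at hn
  have hb1 : (lam - q) * L ≤ (1/2^n) * L := mul_le_mul_of_nonneg_right hdiff.le hL
  have hb2 : (lam - q) * L' ≤ (1/2^n) * L' := mul_le_mul_of_nonneg_right hdiff.le hL'
  have hb3 : (1/2^n) * L + (1/2^n) * L' ≤ ε := by nlinarith
  calc dist (σ (lam*L)) (σ' (lam*L'))
      ≤ dist (σ (lam*L)) (σ (q*L)) + dist (σ (q*L)) (σ' (q*L')) +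
        dist (σ' (q*L')) (σ' (lam*L')) := dist_triangle4 _ _ _ _
    _ = (lam - q)*L + dist (σ (q*L)) (σ' (q*L')) + (lam - q)*L' := by
        rw [geod_param h hl0 hl1 hq0 hq1, geod_param h' hq0 hq1 hl0 hl1,
          abs_of_nonneg hdiff0, abs_sub_comm, abs_of_nonneg hdiff0]
    _ ≤ M + ε := by linarith

/-- **Distance-decreasing semiflows have parallel asymptotic rays.**  Let `X` be a uniquely
geodesic, non-positively curved (CN inequality) complete metric space, and `Φ` a semiflow on
`X` which is distance-nonincreasing.  If the trajectories `t ↦ Φ t xᵢ` (`i = 1, 2`) are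
asymptotic to geodesic rays `χᵢ`, then `χ₁` and `χ₂` are parallel:
`sup_t dist (χ₁ t) (χ₂ t) < ∞`. -/
theorem stmt_18 {X : Type*} [MetricSpace X] [CompleteSpace X]
    (hgeo : GeodSpace X) (hcn : CNIneq X)
    (huniq : ∀ (x y : X) (σ₁ σ₂ : ℝ → X), UnitGeodFromTo σ₁ x y → UnitGeodFromTo σ₂ x y →
      ∀ s ∈ Set.Icc (0 : ℝ) (dist x y), σ₁ s = σ₂ s)
    (Φ : ℝ → X → X)
    (hΦ0 : ∀ x, Φ 0 x = x)
    (hΦadd : ∀ s ≥ (0:ℝ), ∀ t ≥ (0:ℝ), ∀ x, Φ (s + t) x = Φ s (Φ t x))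
    (hnonexp : ∀ t ≥ (0:ℝ), ∀ x y : X, dist (Φ t x) (Φ t y) ≤ dist x y)
    (x₁ x₂ : X) (χ₁ χ₂ : ℝ → X)
    (h₁ : IsAsymptoticTo (fun t => Φ t x₁) χ₁)
    (h₂ : IsAsymptoticTo (fun t => Φ t x₂) χ₂) :
    ∃ C : ℝ, ∀ t : ℝ, 0 ≤ t → dist (χ₁ t) (χ₂ t) ≤ C := by
  obtain ⟨hray₁, hasym₁⟩ := h₁
  obtain ⟨hray₂, hasym₂⟩ := h₂
  refine ⟨dist (χ₁ 0) (χ₂ 0) + 2*(dist (χ₁ 0) (χ₂ 0) + dist x₁ x₂) + 2, ?_⟩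
  intro s hs
  have hD0 : (0:ℝ) ≤ dist (χ₁ 0) (χ₂ 0) := dist_nonneg
  have hD : (0:ℝ) ≤ dist x₁ x₂ := dist_nonneg
  rcases eq_or_lt_of_le hs with heq | hs
  · rw [← heq]; linarith
  · obtain ⟨T₁, hT₁⟩ := hasym₁ s hs 1 one_pos
    obtain ⟨T₂, hT₂⟩ := hasym₂ s hs 1 one_pos
    set t := max (max T₁ T₂) 0 with ht
    have ht0 : (0:ℝ) ≤ t := le_max_right _ _
    obtain ⟨hsL₁, hclose₁⟩ := hT₁ t (le_trans (le_max_left _ _) (le_max_left _ _))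
    obtain ⟨hsL₂, hclose₂⟩ := hT₂ t (le_trans (le_max_right _ _) (le_max_left _ _))
    simp only at hsL₁ hclose₁ hsL₂ hclose₂
    obtain ⟨σ₁, hσ₁⟩ := hgeo (χ₁ 0) (Φ t x₁)
    obtain ⟨σ₂, hσ₂⟩ := hgeo (χ₂ 0) (Φ t x₂)
    have hL₁pos : 0 < dist (χ₁ 0) (Φ t x₁) := lt_of_lt_of_le hs hsL₁
    have hL₂ : (0:ℝ) ≤ dist (χ₂ 0) (Φ t x₂) := dist_nonneg
    set lam := s / dist (χ₁ 0) (Φ t x₁) with hlam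
    have hlam0 : 0 ≤ lam := div_nonneg hs.le hL₁pos.le
    have hlam1 : lam ≤ 1 := (div_le_one hL₁pos).mpr hsL₁
    have hs1 : lam * dist (χ₁ 0) (Φ t x₁) = s := div_mul_cancel₀ _ (ne_of_gt hL₁pos)
    have hconv := geod_conv hgeo hcn σ₁ σ₂ (χ₁ 0) (Φ t x₁) (χ₂ 0) (Φ t x₂) hσ₁ hσ₂
      lam hlam0 hlam1
    rw [hs1] at hconv
    have hne : dist (Φ t x₁) (Φ t x₂) ≤ dist x₁ x₂ := hnonexp t ht0 x₁ x₂
    have hmid : dist (σ₁ s) (σ₂ (lam * dist (χ₂ 0) (Φ t x₂))) ≤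
        dist (χ₁ 0) (χ₂ 0) + dist x₁ x₂ := by
      refine le_trans hconv (max_le (by linarith) (by linarith))
    -- reparametrization bound
    have hmem1 : lam * dist (χ₂ 0) (Φ t x₂) ∈ Set.Icc (0:ℝ) (dist (χ₂ 0) (Φ t x₂)) :=
      ⟨mul_nonneg hlam0 hL₂, mul_le_of_le_one_left hL₂ hlam1⟩
    have hmem2 : s ∈ Set.Icc (0:ℝ) (dist (χ₂ 0) (Φ t x₂)) := ⟨hs.le, hsL₂⟩
    have hd22 : dist (σ₂ (lam * dist (χ₂ 0) (Φ t x₂))) (σ₂ s) =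
        |lam * dist (χ₂ 0) (Φ t x₂) - s| := hσ₂.2.2 _ hmem1 _ hmem2
    have hL21 : |dist (χ₂ 0) (Φ t x₂) - dist (χ₁ 0) (Φ t x₁)| ≤
        dist (χ₁ 0) (χ₂ 0) + dist x₁ x₂ := by
      rw [abs_sub_le_iff]
      constructor
      · linarith [dist_triangle4 (χ₂ 0) (χ₁ 0) (Φ t x₁) (Φ t x₂),
          dist_comm (χ₂ 0) (χ₁ 0)]
      · linarith [dist_triangle4 (χ₁ 0) (χ₂ 0) (Φ t x₂) (Φ t x₁),
          dist_comm (Φ t x₂) (Φ t x₁)]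
    have habs : |lam * dist (χ₂ 0) (Φ t x₂) - s| ≤ dist (χ₁ 0) (χ₂ 0) + dist x₁ x₂ := by
      have he : lam * dist (χ₂ 0) (Φ t x₂) - s =
          lam * (dist (χ₂ 0) (Φ t x₂) - dist (χ₁ 0) (Φ t x₁)) := by
        rw [← hs1]; ring
      rw [he, abs_mul, abs_of_nonneg hlam0]
      have := mul_le_mul_of_nonneg_right hlam1
        (abs_nonneg (dist (χ₂ 0) (Φ t x₂) - dist (χ₁ 0) (Φ t x₁)))
      linarith
    have hc1 : dist (σ₁ s) (χ₁ s) ≤ 1 := hclose₁ σ₁ hσ₁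
    have hc2 : dist (σ₂ s) (χ₂ s) ≤ 1 := hclose₂ σ₂ hσ₂
    linarith [dist_triangle (χ₁ s) (σ₁ s) (χ₂ s),
      dist_triangle (σ₁ s) (σ₂ (lam * dist (χ₂ 0) (Φ t x₂))) (χ₂ s),
      dist_triangle (σ₂ (lam * dist (χ₂ 0) (Φ t x₂))) (σ₂ s) (χ₂ s),
      dist_comm (χ₁ s) (σ₁ s), hd22, habs, hmid]
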